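/- arXiv:1908.08406 — 5 statements merged into one kernel-verified Lean document; each statement's English description precedes it below -/
import Mathlib

section
/- Grounded semantics is SCC-rich: for every AF F = ⟨Ar, att⟩ with exactly one strongly connected component and every argument a ∈ Ar, there exists a grounded extension E of F such that E does not attack a. -/
variable {A : Type*}

def conflictFree (att : A → A → Prop) (S : Set A) : Prop :=
  ∀ b ∈ S, ∀ c ∈ S, ¬ att b c

def attacks (att : A → A → Prop) (S : Set A) (a : A) : Prop :=
  ∃ b ∈ S, att b a

/-- `S` defends `a`: every attacker of `a` is attacked by `S`. -/
def defends (att : A → A → Prop) (S : Set A) (a : A) : Prop :=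
  ∀ b, att b a → attacks att S b

/-- `S` is a complete extension. -/
def completeExt (att : A → A → Prop) (S : Set A) : Prop :=
  conflictFree att S ∧ (∀ a ∈ S, defends att S a) ∧ (∀ a, defends att S a → a ∈ S)

/-- `S` is a grounded extension: a ⊆-minimal complete extension. -/
def groundedExt (att : A → A → Prop) (S : Set A) : Prop :=
  completeExt att S ∧ ∀ T, completeExt att T → T ⊆ S → T = S

/-- The AF has exactly one strongly connected component: any two arguments are
related by mutual att-reachability (or equal). -/
def oneSCC (att : A → A → Prop) : Prop :=
  ∀ x y : A, x = y ∨ (Relation.TransGen att x y ∧ Relation.TransGen att y x)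

theorem grounded_SCCRich [Fintype A] (att : A → A → Prop) (h1 : oneSCC att) (a : A) :
    ∃ E, groundedExt att E ∧ ¬ attacks att E a := by
  by_cases h : ∀ x, ∃ b, att b x
  · refine ⟨∅, ⟨⟨fun b hb => hb.elim, fun a ha => ha.elim, ?_⟩, ?_⟩, ?_⟩
    · intro a' hd
      obtain ⟨b, hb⟩ := h a'
      obtain ⟨c, hc, _⟩ := hd b hb
      exact hc.elim
    · intro T _ hT
      exact Set.subset_empty_iff.mp hT
    · rintro ⟨b, hb, _⟩; exact hb
  · push_neg at h
    obtain ⟨x, hx⟩ := h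
    have hno : ∀ u v, ¬ att u v := by
      intro u v huv
      rcases h1 v x with rfl | ⟨hvx, _⟩
      · exact hx u huv
      · obtain ⟨c, -, hc⟩ := Relation.TransGen.tail'_iff.mp hvx
        exact hx c hc
    refine ⟨Set.univ, ⟨⟨fun b _ c _ => hno b c, fun a' _ b hb => (hno b a' hb).elim,
      fun _ _ => Set.mem_univ _⟩, ?_⟩, ?_⟩
    · intro T hT _
      ext a'
      simp only [Set.mem_univ, iff_true]
      exact hT.2.2 a' fun b hb => (hno b a' hb).elim
    · rintro ⟨b, _, hb⟩; exact hno b a hb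
end

section
/- Complete semantics is SCC-rich: for every AF F = ⟨Ar, att⟩ with exactly one strongly connected component and every argument a ∈ Ar, there exists a complete extension E of F such that E does not attack a. -/
variable {A : Type*}

theorem complete_SCCRich [Fintype A] (att : A → A → Prop) (h1 : oneSCC att) (a : A) :
    ∃ E, completeExt att E ∧ ¬ attacks att E a := by
  by_cases hedge : ∃ x y, att x y
  · -- every argument has an attacker, so ∅ is complete
    obtain ⟨x, y, hxy⟩ := hedge
    have hatt : ∀ z : A, ∃ w, att w z := by
      intro z
      rcases h1 y z with h | ⟨hyz, _⟩
      · exact ⟨x, h ▸ hxy⟩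
      · induction hyz with
        | single h => exact ⟨y, h⟩
        | tail _ h => exact ⟨_, h⟩
    refine ⟨∅, ⟨?_, ?_, ?_⟩, ?_⟩
    · intro b hb; exact absurd hb (Set.notMem_empty b)
    · intro b hb; exact absurd hb (Set.notMem_empty b)
    · intro b hb
      obtain ⟨w, hw⟩ := hatt b
      obtain ⟨c, hc, _⟩ := hb w hw
      exact absurd hc (Set.notMem_empty c)
    · rintro ⟨b, hb, -⟩; exact Set.notMem_empty b hb
  · push_neg at hedge
    refine ⟨Set.univ, ⟨?_, ?_, ?_⟩, ?_⟩
    · intro b _ c _; exact hedge b c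
    · intro b _ w hw; exact absurd hw (hedge w b)
    · intro b _; trivial
    · rintro ⟨b, -, hb⟩; exact hedge b a hb
end

section
/- Naive semantics satisfies INRA: for every AF F = ⟨Ar, att⟩ and every argument a ∈ Ar, if every naive extension of F attacks a, then the naive extensions of F equal the naive extensions of F restricted to Ar \ {a}. -/
variable {A : Type*}

/-- `S` is a naive extension of the AF restricted to the set `Ar` of arguments:
a ⊆-maximal conflict-free subset of `Ar`.  (Conflict-freeness and maximality in
the induced subframework on `Ar` only involve attacks among members of `Ar`,
so the global attack relation can be used.) -/
def naiveExtIn (Ar : Set A) (att : A → A → Prop) (S : Set A) : Prop :=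
  S ⊆ Ar ∧ conflictFree att S ∧ ∀ T, T ⊆ Ar → conflictFree att T → S ⊆ T → T = S

lemma exists_naive_ext [Fintype A] (att : A → A → Prop) (T : Set A)
    (hT : conflictFree att T) :
    ∃ M, T ⊆ M ∧ naiveExtIn Set.univ att M := by
  have hfin : ({U : Set A | conflictFree att U ∧ T ⊆ U}).Finite := Set.toFinite _
  obtain ⟨M, hM, hmax⟩ : ∃ M ∈ {U : Set A | conflictFree att U ∧ T ⊆ U}, ∀ M' ∈ {U : Set A | conflictFree att U ∧ T ⊆ U}, id M ≤ id M' → id M = id M' := by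
    obtain ⟨M, hM⟩ := hfin.exists_maximal ⟨T, hT, subset_rfl⟩
    exact ⟨M, hM.1, fun M' h1 h2 => hM.eq_of_le h1 h2⟩
  refine ⟨M, hM.2, subset_rfl.trans (Set.subset_univ M), hM.1, ?_⟩
  intro T' _ hT'cf hMT'
  exact (hmax T' ⟨hT'cf, hM.2.trans hMT'⟩ hMT').symm

theorem naive_INRA [Fintype A] (att : A → A → Prop) (a : A)
    (h : ∀ S, naiveExtIn Set.univ att S → attacks att S a) :
    {S | naiveExtIn Set.univ att S} = {S | naiveExtIn {x | x ≠ a} att S} := by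
  ext S
  simp only [Set.mem_setOf_eq]
  constructor
  · rintro hS
    obtain ⟨hsub, hcf, hmax⟩ := hS
    have haS : a ∉ S := by
      intro haS
      obtain ⟨b, hbS, hba⟩ := h S ⟨hsub, hcf, hmax⟩
      exact hcf b hbS a haS hba
    refine ⟨fun x hx hxa => haS (hxa ▸ hx), hcf, ?_⟩
    intro T hTsub hTcf hST
    exact hmax T (Set.subset_univ T) hTcf hST
  · rintro ⟨hsub, hcf, hmax⟩
    refine ⟨Set.subset_univ S, hcf, ?_⟩
    intro T _ hTcf hST
    obtain ⟨M, hTM, hMnaive⟩ := exists_naive_ext att T hTcf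
    have haM : a ∉ M := by
      intro haM
      obtain ⟨b, hbM, hba⟩ := h M hMnaive
      exact hMnaive.2.1 b hbM a haM hba
    have hTsub : T ⊆ {x | x ≠ a} := fun x hx hxa => haM (hxa ▸ hTM hx)
    exact hmax T hTsub hTcf hST
end

section
/- Every AF has at least one SCOOC-naive extension, i.e., the collection of conflict-free sets that are strongly complete outside odd cycles has a ⊆-maximal element (in particular, the collection is nonempty). -/
variable {A : Type*}

def inOddCycle (att : A → A → Prop) (x : A) : Prop :=
  ∃ n : ℕ, Odd n ∧ ∃ p : ℕ → A, p 0 = x ∧ p n = x ∧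
    (∀ i, i < n → att (p i) (p (i + 1))) ∧
    (∀ i j, i < j → j ≤ n → p i = p j → i = 0 ∧ j = n)

/-- `S` is strongly complete outside odd cycles. -/
def scooc (att : A → A → Prop) (S : Set A) : Prop :=
  ∀ x, ¬ inOddCycle att x → (∀ y, att y x → ¬ inOddCycle att y) →
    (∀ b ∈ S, ¬ att b x) → x ∈ S

/-- `S` is a SCOOC-naive extension: ⊆-maximal among conflict-free sets that are
strongly complete outside odd cycles. -/
def sccoocNaiveExt (att : A → A → Prop) (S : Set A) : Prop :=
  conflictFree att S ∧ scooc att S ∧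
    ∀ T, conflictFree att T → scooc att T → S ⊆ T → T = S

/-- A walk of length `n` staying inside `V`. -/
def IsWalkIn (att : A → A → Prop) (V : Set A) (p : ℕ → A) (n : ℕ) : Prop :=
  (∀ i ≤ n, p i ∈ V) ∧ ∀ i < n, att (p i) (p (i + 1))

/-- Reachability inside `V`. -/
def ReachIn (att : A → A → Prop) (V : Set A) (a b : A) : Prop :=
  ∃ n p, IsWalkIn att V p n ∧ p 0 = a ∧ p n = b

lemma walk_mono {att : A → A → Prop} {V W : Set A} (h : V ⊆ W) {p : ℕ → A} {n : ℕ}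
    (hp : IsWalkIn att V p n) : IsWalkIn att W p n :=
  ⟨fun i hi => h (hp.1 i hi), hp.2⟩

lemma walk_append {att : A → A → Prop} {V : Set A} {p q : ℕ → A} {m k : ℕ}
    (hp : IsWalkIn att V p m) (hq : IsWalkIn att V q k) (hpq : p m = q 0) :
    ∃ r, IsWalkIn att V r (m + k) ∧ r 0 = p 0 ∧ r (m + k) = q k := by
  refine ⟨fun i => if i ≤ m then p i else q (i - m), ⟨?_, ?_⟩, ?_, ?_⟩
  · intro i hi
    by_cases h : i ≤ m
    · simpa [h] using hp.1 i h
    · simp only [if_neg h]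
      exact hq.1 (i - m) (by omega)
  · intro i hi
    by_cases h : i + 1 ≤ m
    · simp only [if_pos h, if_pos (by omega : i ≤ m)]
      exact hp.2 i (by omega)
    · by_cases h' : i ≤ m
      · have hi' : i = m := by omega
        subst hi'
        simp only [if_pos le_rfl, if_neg h, hpq]
        have h1 : i + 1 - i = 1 := by omega
        rw [h1]
        simpa using hq.2 0 (by omega)
      · simp only [if_neg h, if_neg h']
        have h1 : i + 1 - m = (i - m) + 1 := by omega
        rw [h1]
        exact hq.2 (i - m) (by omega)
  · simp
  · by_cases hk : k = 0
    · subst hk; simpa using hpq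
    · simp only [if_neg (by omega : ¬ m + k ≤ m)]
      congr 1
      omega

lemma reachIn_refl {att : A → A → Prop} {V : Set A} {a : A} (ha : a ∈ V) :
    ReachIn att V a a :=
  ⟨0, fun _ => a, ⟨fun _ _ => ha, fun i hi => absurd hi (by omega)⟩, rfl, rfl⟩

lemma reachIn_trans {att : A → A → Prop} {V : Set A} {a b c : A}
    (h1 : ReachIn att V a b) (h2 : ReachIn att V b c) : ReachIn att V a c := by
  obtain ⟨m, p, hp, hp0, hpm⟩ := h1
  obtain ⟨k, q, hq, hq0, hqk⟩ := h2
  obtain ⟨r, hr, hr0, hrn⟩ := walk_append hp hq (by rw [hpm, hq0])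
  exact ⟨m + k, r, hr, by rw [hr0, hp0], by rw [hrn, hqk]⟩

lemma singleWalk {att : A → A → Prop} {V : Set A} {a b : A} (ha : a ∈ V) (hb : b ∈ V)
    (h : att a b) : IsWalkIn att V (fun i => if i = 0 then a else b) 1 := by
  constructor
  · intro i _
    by_cases hi : i = 0 <;> simp [hi, ha, hb]
  · intro i hi
    have : i = 0 := by omega
    simp [this, h]

lemma reachIn_of_att {att : A → A → Prop} {V : Set A} {a b : A} (ha : a ∈ V) (hb : b ∈ V)
    (h : att a b) : ReachIn att V a b :=
  ⟨1, _, singleWalk ha hb h, by simp, by simp⟩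

lemma oddWalk_has_oddCycle (att : A → A → Prop) :
    ∀ n, Odd n → ∀ p : ℕ → A, (∀ i < n, att (p i) (p (i + 1))) → p n = p 0 →
      ∃ j ≤ n, inOddCycle att (p j) := by
  intro n
  induction n using Nat.strong_induction_on with
  | _ n ih =>
    intro hodd p hp hclosed
    by_cases hsimp : ∀ i j, i < j → j ≤ n → p i = p j → i = 0 ∧ j = n
    · exact ⟨0, Nat.zero_le n, n, hodd, p, rfl, hclosed, fun i hi => hp i hi, hsimp⟩
    · push_neg at hsimp
      obtain ⟨i, j, hij, hjn, hpij, hne⟩ := hsimp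
      have hn1 : 1 ≤ n := by
        rcases hodd with ⟨t, ht⟩; omega
      set d := j - i with hd
      have hd1 : 1 ≤ d := by omega
      have hdn : d ≤ n - 1 := by omega
      have hpar : Odd d ∨ Odd (n - d) := by
        rw [Nat.odd_iff] at hodd ⊢
        rw [Nat.odd_iff]
        omega
      rcases hpar with hOd | hOnd
      · -- recurse on the inner cycle p i .. p j
        have hlt : d < n := by omega
        obtain ⟨j', hj', hcyc⟩ := ih d hlt hOd (fun t => p (i + t))
          (fun t ht => by
            show att (p (i + t)) (p (i + (t + 1)))
            have h1 : i + (t + 1) = i + t + 1 := by omega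
            rw [h1]
            exact hp (i + t) (by omega))
          (by
            have h1 : i + d = j := by omega
            simp only [h1, Nat.add_zero]
            exact hpij.symm)
        exact ⟨i + j', by omega, hcyc⟩
      · -- recurse on the outer closed walk p 0 .. p i (= p j) .. p n
        have hlt : n - d < n := by omega
        obtain ⟨j', hj', hcyc⟩ := ih (n - d) hlt hOnd
          (fun t => if t ≤ i then p t else p (t + d))
          (fun t ht => by
            show att (if t ≤ i then p t else p (t + d)) (if t + 1 ≤ i then p (t + 1) else p (t + 1 + d))
            by_cases h1 : t + 1 ≤ i
            · simp only [if_pos h1, if_pos (by omega : t ≤ i)]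
              exact hp t (by omega)
            · by_cases h2 : t ≤ i
              · have hti : t = i := by omega
                have hjlt : j < n := by
                  by_contra hc
                  have hjn' : j = n := by omega
                  have : i ≠ 0 := fun h0 => hne h0 hjn'
                  omega
                simp only [hti, hpij]
                rw [if_pos (le_refl i), if_neg (by omega : ¬ i + 1 ≤ i)]
                have h3 : i + 1 + d = j + 1 := by omega
                rw [h3]
                exact hp j hjlt
              · simp only [if_neg h1, if_neg h2]
                have h3 : t + 1 + d = (t + d) + 1 := by omega
                rw [h3]
                exact hp (t + d) (by omega))
          (by
            show (if n - d ≤ i then p (n - d) else p (n - d + d)) = (if 0 ≤ i then p 0 else p (0 + d))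
            simp only [if_pos (Nat.zero_le i)]
            by_cases h1 : n - d ≤ i
            · have h2 : n - d = i := by omega
              have h3 : j = n := by omega
              rw [if_pos h1, h2, hpij, h3, hclosed]
            · rw [if_neg h1]
              have h2 : n - d + d = n := by omega
              rw [h2, hclosed])
        by_cases h1 : j' ≤ i
        · refine ⟨j', by omega, ?_⟩
          simpa [if_pos h1] using hcyc
        · refine ⟨j' + d, by omega, ?_⟩
          simpa [if_neg h1] using hcyc

lemma richardson [Fintype A] [DecidableEq A] (att : A → A → Prop) :
    ∀ (N : ℕ) (V : Finset A), V.card ≤ N →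
    (∀ (p : ℕ → A) n, Odd n → IsWalkIn att (↑V) p n → p n ≠ p 0) →
    ∃ S : Finset A, S ⊆ V ∧ (∀ a ∈ S, ∀ b ∈ S, ¬att a b) ∧
      (∀ w ∈ V, w ∉ S → ∃ s ∈ S, att s w) := by
  classical
  intro N
  induction N with
  | zero =>
    intro V hV _
    have : V = ∅ := Finset.card_eq_zero.mp (Nat.le_zero.mp hV)
    subst this
    exact ⟨∅, by simp, by simp, by simp⟩
  | succ N ih =>
    intro V hV hodd
    rcases V.eq_empty_or_nonempty with rfl | hne
    · exact ⟨∅, by simp, by simp, by simp⟩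
    obtain ⟨v, hv, hmin⟩ := V.exists_min_image
      (fun w => (V.filter (fun u => ReachIn att (↑V) u w)).card) hne
    set C := V.filter (fun u => ReachIn att (↑V) u v) with hC
    have hvC : v ∈ C := Finset.mem_filter.2 ⟨hv, reachIn_refl (by exact_mod_cast hv)⟩
    have hCV : C ⊆ V := Finset.filter_subset _ _
    -- every member of C is reachable from v
    have hback : ∀ w ∈ C, ReachIn att (↑V) v w := by
      intro w hw
      obtain ⟨hwV, hwv⟩ := Finset.mem_filter.1 hw
      have hsub : V.filter (fun u => ReachIn att (↑V) u w) ⊆ C := by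
        intro u hu
        obtain ⟨huV, huw⟩ := Finset.mem_filter.1 hu
        exact Finset.mem_filter.2 ⟨huV, reachIn_trans huw hwv⟩
      have heq : V.filter (fun u => ReachIn att (↑V) u w) = C :=
        Finset.eq_of_subset_of_card_le hsub (hmin w hwV)
      have : v ∈ V.filter (fun u => ReachIn att (↑V) u w) := heq ▸ hvC
      exact (Finset.mem_filter.1 this).2
    -- C is closed under in-edges
    have hcl : ∀ u ∈ V, ∀ w ∈ C, att u w → u ∈ C := by
      intro u hu w hw hatt
      exact Finset.mem_filter.2 ⟨hu,
        reachIn_trans (reachIn_of_att (by exact_mod_cast hu) (by exact_mod_cast hCV hw) hatt)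
          (Finset.mem_filter.1 hw).2⟩
    set SC := C.filter
      (fun w => ∃ n : ℕ, ∃ p : ℕ → A, Even n ∧ IsWalkIn att (↑V) p n ∧ p 0 = w ∧ p n = v) with hSC
    have hSCC : SC ⊆ C := Finset.filter_subset _ _
    -- independence of SC
    have hSCind : ∀ s ∈ SC, ∀ t ∈ SC, ¬ att s t := by
      intro s hs t ht hatt
      obtain ⟨hsC, m, pm, hm, hpm, hpm0, hpmn⟩ := Finset.mem_filter.1 hs
      obtain ⟨htC, k, pk, hk, hpk, hpk0, hpkn⟩ := Finset.mem_filter.1 ht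
      have hsV : (s : A) ∈ (↑V : Set A) := by exact_mod_cast hCV hsC
      have htV : (t : A) ∈ (↑V : Set A) := by exact_mod_cast hCV htC
      -- walk s → v of length 1 + k
      obtain ⟨q, hq, hq0, hqn⟩ := walk_append (singleWalk hsV htV hatt) hpk (by simpa using hpk0.symm)
      -- walk v → s of some length l
      obtain ⟨l, pl, hpl, hpl0, hpln⟩ := hback s hsC
      -- closed walks at v of lengths l + (1 + k) and l + m
      obtain ⟨w1, hw1, hw10, hw1n⟩ := walk_append hpl hq (by rw [hpln]; simp [hq0])
      obtain ⟨w2, hw2, hw20, hw2n⟩ := walk_append hpl hpm (by rw [hpln, hpm0])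
      have h1 : ¬ Odd (l + (1 + k)) := fun ho =>
        hodd w1 _ ho hw1 (by rw [hw1n, hw10, hqn, hpl0, hpkn])
      have h2 : ¬ Odd (l + m) := fun ho =>
        hodd w2 _ ho hw2 (by rw [hw2n, hw20, hpl0, hpmn])
      rw [Nat.even_iff] at hm hk
      rw [Nat.odd_iff] at h1 h2
      omega
    -- coverage of C by SC
    have hSCcov : ∀ w ∈ C, w ∉ SC → ∃ s ∈ SC, att s w := by
      intro w hwC hwn
      obtain ⟨hwV, m, pm, hpm, hpm0, hpmn⟩ := Finset.mem_filter.1 hwC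
      have hmodd : Odd m := by
        by_contra hc
        exact hwn (Finset.mem_filter.2 ⟨hwC, m, pm, Nat.not_odd_iff_even.mp hc, hpm, hpm0, hpmn⟩)
      obtain ⟨r, pr, hpr, hpr0, hprn⟩ := hback w hwC
      have hr0 : r ≠ 0 := by
        intro h
        subst h
        exact hodd pm m hmodd hpm (by rw [hpmn, hpm0, ← hpr0, hprn])
      set u := pr (r - 1) with hu
      have huV : u ∈ V := by
        have := hpr.1 (r - 1) (by omega)
        exact_mod_cast this
      have hu_att : att u w := by
        have := hpr.2 (r - 1) (by omega)
        have h1 : r - 1 + 1 = r := by omega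
        rw [h1] at this
        rwa [hprn] at this
      have huC : u ∈ C := hcl u huV w hwC hu_att
      obtain ⟨q, hq, hq0, hqn⟩ :=
        walk_append (singleWalk (by exact_mod_cast huV) (by exact_mod_cast hwV) hu_att) hpm
          (by simpa using hpm0.symm)
      have huSC : u ∈ SC := Finset.mem_filter.2 ⟨huC, 1 + m, q,
        by rw [Nat.even_iff]; rw [Nat.odd_iff] at hmodd; omega,
        hq, by simpa using hq0, by rw [hqn, hpmn]⟩
      exact ⟨u, huSC, hu_att⟩
    -- remove C and everything attacked by SC
    set D := (V \ C).filter (fun u => ∃ s ∈ SC, att s u) with hD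
    set V' := (V \ C) \ D with hV'
    have hV'sub : V' ⊆ V \ C := Finset.sdiff_subset
    have hV'V : V' ⊆ V := hV'sub.trans Finset.sdiff_subset
    have hV'card : V'.card ≤ N := by
      have h1 : V'.card ≤ (V \ C).card := Finset.card_le_card hV'sub
      have h2 : (V \ C).card = V.card - C.card := Finset.card_sdiff_of_subset hCV
      have h3 : 1 ≤ C.card := Finset.card_pos.mpr ⟨v, hvC⟩
      omega
    have hV'odd : ∀ (p : ℕ → A) n, Odd n → IsWalkIn att (↑V') p n → p n ≠ p 0 := by
      intro p n hn hp
      exact hodd p n hn (walk_mono (by exact_mod_cast Finset.coe_subset.2 hV'V) hp)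
    obtain ⟨S', hS'V, hS'cf, hS'cov⟩ := ih V' hV'card hV'odd
    refine ⟨SC ∪ S', ?_, ?_, ?_⟩
    · intro a ha
      rcases Finset.mem_union.1 ha with h | h
      · exact hCV (hSCC h)
      · exact hV'V (hS'V h)
    · intro a ha b hb
      rcases Finset.mem_union.1 ha with ha' | ha' <;> rcases Finset.mem_union.1 hb with hb' | hb'
      · exact hSCind a ha' b hb'
      · -- a ∈ SC, b ∈ S'
        intro hatt
        have hbD : b ∈ D := Finset.mem_filter.2 ⟨hV'sub (hS'V hb'), a, ha', hatt⟩
        exact (Finset.mem_sdiff.1 (hS'V hb')).2 hbD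
      · -- a ∈ S', b ∈ SC
        intro hatt
        have haC : a ∈ C := hcl a (hV'V (hS'V ha')) b (hSCC hb') hatt
        exact (Finset.mem_sdiff.1 (hV'sub (hS'V ha'))).2 haC
      · exact hS'cf a ha' b hb'
    · intro w hwV hwS
      have hw1 : w ∉ SC := fun h => hwS (Finset.mem_union_left _ h)
      have hw2 : w ∉ S' := fun h => hwS (Finset.mem_union_right _ h)
      by_cases hwC : w ∈ C
      · obtain ⟨s, hs, hatt⟩ := hSCcov w hwC hw1
        exact ⟨s, Finset.mem_union_left _ hs, hatt⟩
      by_cases hwD : w ∈ D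
      · obtain ⟨s, hs, hatt⟩ := (Finset.mem_filter.1 hwD).2
        exact ⟨s, Finset.mem_union_left _ hs, hatt⟩
      · have hwV' : w ∈ V' := Finset.mem_sdiff.2 ⟨Finset.mem_sdiff.2 ⟨hwV, hwC⟩, hwD⟩
        obtain ⟨s, hs, hatt⟩ := hS'cov w hwV' hw2
        exact ⟨s, Finset.mem_union_right _ hs, hatt⟩

theorem sccoocNaive_exists [Fintype A] (att : A → A → Prop) :
    ∃ E, sccoocNaiveExt att E := by
  classical
  set V : Finset A := Finset.univ.filter
    (fun x => ¬ inOddCycle att x ∧ ∀ y, att y x → ¬ inOddCycle att y) with hVdef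
  have hVodd : ∀ (p : ℕ → A) n, Odd n → IsWalkIn att (↑V) p n → p n ≠ p 0 := by
    intro p n hn hw hclosed
    obtain ⟨j, hj, hcyc⟩ := oddWalk_has_oddCycle att n hn p hw.2 hclosed
    have hjV : p j ∈ V := by exact_mod_cast hw.1 j hj
    rw [hVdef, Finset.mem_filter] at hjV
    exact hjV.2.1 hcyc
  obtain ⟨S₀, hS₀V, hS₀cf, hS₀cov⟩ := richardson att V.card V le_rfl hVodd
  have hmem : conflictFree att (↑S₀ : Set A) ∧ scooc att (↑S₀ : Set A) := by
    constructor
    · intro b hb c hc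
      exact hS₀cf b (by exact_mod_cast hb) c (by exact_mod_cast hc)
    · intro x hx1 hx2 hx3
      have hxV : x ∈ V := by
        rw [hVdef, Finset.mem_filter]
        exact ⟨Finset.mem_univ x, hx1, hx2⟩
      by_contra hxS
      obtain ⟨s, hs, hatt⟩ := hS₀cov x hxV (by exact_mod_cast hxS)
      exact hx3 s (by exact_mod_cast hs) hatt
  obtain ⟨E, hE, hmax⟩ := Set.Finite.exists_maximalFor (id : Set A → Set A)
    {S : Set A | conflictFree att S ∧ scooc att S} (Set.toFinite _) ⟨_, hmem⟩
  exact ⟨E, hE.1, hE.2, fun T hT1 hT2 hsub => Set.Subset.antisymm (hmax (j := T) ⟨hT1, hT2⟩ hsub) hsub⟩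
end

section
/- SCOOC-naive semantics is SCC-semi-rich: for every AF F = ⟨Ar, att⟩ with exactly one SCC and every argument c ∈ Ar with (c,c) ∉ att, there exists an SCOOC-naive extension E of F such that E does not attack c (indeed c ∈ E). -/
variable {A : Type*}

def IsWalk (att : A → A → Prop) (p : ℕ → A) (n : ℕ) : Prop :=
  ∀ i, i < n → att (p i) (p (i + 1))

def EdgeOf (p : ℕ → A) (n : ℕ) (a b : A) : Prop :=
  ∃ i, i < n ∧ p i = a ∧ p (i + 1) = b

def CycSimple (p : ℕ → A) (n : ℕ) : Prop :=
  ∀ i j, i < j → j ≤ n → p i = p j → i = 0 ∧ j = n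

lemma inOddCycle_of_cycle {att : A → A → Prop} {p : ℕ → A} {n : ℕ}
    (hw : IsWalk att p n) (hodd : Odd n) (h0 : p 0 = p n) (hs : CycSimple p n)
    {k : ℕ} (hk : k ≤ n) : inOddCycle att (p k) := by
  have hn : 0 < n := hodd.pos
  rcases Nat.eq_zero_or_pos k with hk0 | hkpos
  · subst hk0
    exact ⟨n, hodd, p, rfl, h0.symm, hw, hs⟩
  rcases eq_or_lt_of_le hk with hkn | hklt
  · rw [hkn]
    exact ⟨n, hodd, p, h0, rfl, hw, hs⟩
  -- main case 0 < k < n : rotate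
  have pfact : ∀ a b, a ≤ n → b ≤ n → p a = p b →
      a = b ∨ (a = 0 ∧ b = n) ∨ (a = n ∧ b = 0) := by
    intro a b ha hb hab
    rcases lt_trichotomy a b with h | h | h
    · exact Or.inr (Or.inl (hs a b h hb hab))
    · exact Or.inl h
    · rcases hs b a h ha hab.symm with ⟨h1, h2⟩
      exact Or.inr (Or.inr ⟨h2, h1⟩)
  set σ : ℕ → ℕ := fun i => if i ≤ n - k then k + i else i - (n - k) with hσ
  have hσ0 : σ 0 = k := by simp [hσ]
  have hσn : σ n = k := by
    simp only [hσ]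
    rw [if_neg (by omega)]
    omega
  refine ⟨n, hodd, fun i => p (σ i), by show p (σ 0) = p k; rw [hσ0],
    by show p (σ n) = p k; rw [hσn], ?_, ?_⟩
  · -- walk
    intro i hi
    simp only [hσ]
    by_cases h1 : i + 1 ≤ n - k
    · rw [if_pos (by omega), if_pos h1]
      have := hw (k + i) (by omega)
      simpa [show k + (i+1) = k + i + 1 by omega] using this
    · by_cases h2 : i ≤ n - k
      · rw [if_pos h2, if_neg h1]
        have e1 : k + i = n := by omega
        have e2 : i + 1 - (n - k) = 1 := by omega
        rw [e1, e2, ← h0]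
        exact hw 0 hn
      · rw [if_neg h2, if_neg h1]
        have := hw (i - (n - k)) (by omega)
        simpa [show i + 1 - (n-k) = i - (n-k) + 1 by omega] using this
  · -- simplicity
    intro i j hij hjn hpe
    simp only [hσ] at hpe
    have hbi : σ i ≤ n := by simp only [hσ]; split <;> omega
    have hbj : σ j ≤ n := by simp only [hσ]; split <;> omega
    by_cases h1 : i ≤ n - k <;> by_cases h2 : j ≤ n - k
    · rw [if_pos h1, if_pos h2] at hpe
      rcases pfact _ _ (by omega) (by omega) hpe with h | ⟨h, h'⟩ | ⟨h, h'⟩ <;> omega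
    · rw [if_pos h1, if_neg h2] at hpe
      rcases pfact _ _ (by omega) (by omega) hpe with h | ⟨h, h'⟩ | ⟨h, h'⟩ <;> omega
    · omega
    · rw [if_neg h1, if_neg h2] at hpe
      rcases pfact _ _ (by omega) (by omega) hpe with h | ⟨h, h'⟩ | ⟨h, h'⟩ <;> omega

lemma exists_simple_odd_cycle {att : A → A → Prop} :
    ∀ n, Odd n → ∀ p : ℕ → A, IsWalk att p n → p 0 = p n →
    ∃ m q, Odd m ∧ IsWalk att q m ∧ q 0 = q m ∧ CycSimple q m ∧
      ∀ a b, EdgeOf q m a b → EdgeOf p n a b := by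
  intro n
  induction n using Nat.strong_induction_on with
  | _ n ih =>
    intro hodd p hw hcl
    by_cases hsimp : CycSimple p n
    · exact ⟨n, p, hodd, hw, hcl, hsimp, fun a b h => h⟩
    unfold CycSimple at hsimp
    push_neg at hsimp
    obtain ⟨i, j, hij, hjn, heq, hne⟩ := hsimp
    set a := j - i with ha
    set b := n - (j - i) with hb
    have hab : a + b = n := by omega
    rcases Nat.even_or_odd a with hea | hoa
    · -- outer walk is odd
      have hob : Odd b := by
        rcases Nat.even_or_odd b with heb | hob
        · exact ((Nat.not_odd_iff_even.mpr (hab ▸ hea.add heb)) hodd).elim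
        · exact hob
      have hblt : b < n := by omega
      set q2 : ℕ → A := fun t => if t ≤ i then p t else p (t + (j - i)) with hq2
      have hw2 : IsWalk att q2 b := by
        intro t ht
        simp only [hq2]
        by_cases h1 : t + 1 ≤ i
        · rw [if_pos (by omega), if_pos h1]
          exact hw t (by omega)
        · by_cases h2 : t ≤ i
          · have hti : t = i := by omega
            rw [if_pos h2, if_neg h1, hti, heq]
            have e : i + 1 + (j - i) = j + 1 := by omega
            rw [e]
            exact hw j (by omega)
          · rw [if_neg h2, if_neg h1]
            have := hw (t + (j - i)) (by omega)
            simpa [show t + 1 + (j-i) = t + (j-i) + 1 by omega] using this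
      have hcl2 : q2 0 = q2 b := by
        simp only [hq2]
        rw [if_pos (Nat.zero_le i)]
        by_cases h1 : b ≤ i
        · rw [if_pos h1]
          have hj : j = n := by omega
          have hbi : b = i := by omega
          rw [hbi, heq, hj, ← hcl]
        · rw [if_neg h1]
          rw [show b + (j - i) = n by omega, ← hcl]
      obtain ⟨m, q, hm1, hm2, hm3, hm4, hm5⟩ := ih b hblt hob q2 hw2 hcl2
      refine ⟨m, q, hm1, hm2, hm3, hm4, ?_⟩
      intro x y hxy
      obtain ⟨t, ht, hx, hy⟩ := hm5 x y hxy
      simp only [hq2] at hx hy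
      by_cases h1 : t + 1 ≤ i
      · rw [if_pos (by omega)] at hx; rw [if_pos h1] at hy
        exact ⟨t, by omega, hx, hy⟩
      · by_cases h2 : t ≤ i
        · have hti : t = i := by omega
          rw [if_pos h2] at hx; rw [if_neg h1] at hy
          refine ⟨j, by omega, ?_, ?_⟩
          · rw [← heq, ← hx, hti]
          · rw [← hy, hti, show i + 1 + (j - i) = j + 1 by omega]
        · rw [if_neg h2] at hx; rw [if_neg h1] at hy
          refine ⟨t + (j - i), by omega, hx, ?_⟩
          rw [← hy, show t + (j-i) + 1 = t + 1 + (j - i) by omega]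
    · -- inner walk is odd
      have halt : a < n := by
        rcases Nat.lt_or_ge a n with h | h
        · exact h
        · exfalso; exact hne (by omega) (by omega)
      set q1 : ℕ → A := fun t => p (i + t) with hq1
      have hw1 : IsWalk att q1 a := by
        intro t ht
        simp only [hq1]
        have := hw (i + t) (by omega)
        simpa [show i + (t+1) = i + t + 1 by omega] using this
      have hcl1 : q1 0 = q1 a := by
        simp only [hq1]
        rw [show i + 0 = i by omega, show i + a = j by omega]
        exact heq
      obtain ⟨m, q, hm1, hm2, hm3, hm4, hm5⟩ := ih a halt hoa q1 hw1 hcl1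
      refine ⟨m, q, hm1, hm2, hm3, hm4, ?_⟩
      intro x y hxy
      obtain ⟨t, ht, hx, hy⟩ := hm5 x y hxy
      simp only [hq1] at hx hy
      refine ⟨i + t, by omega, hx, ?_⟩
      rw [← hy, show i + t + 1 = i + (t+1) by omega]

def catW (p : ℕ → A) (m : ℕ) (q : ℕ → A) : ℕ → A := fun i => if i ≤ m then p i else q (i - m)

lemma catW_walk {att : A → A → Prop} {p q : ℕ → A} {m n : ℕ}
    (hp : IsWalk att p m) (hq : IsWalk att q n) (hlink : p m = q 0) :
    IsWalk att (catW p m q) (m + n) := by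
  intro i hi
  unfold catW
  by_cases h1 : i + 1 ≤ m
  · rw [if_pos (by omega), if_pos h1]
    exact hp i (by omega)
  · rw [if_neg h1]
    have e : i + 1 - m = (i - m) + 1 := by omega
    rw [e]
    have hv : (if i ≤ m then p i else q (i - m)) = q (i - m) := by
      split
      · have : i = m := by omega
        rw [this, hlink]
        congr 1
        omega
      · rfl
    rw [hv]
    exact hq (i - m) (by omega)

lemma catW_zero (p : ℕ → A) (m : ℕ) (q : ℕ → A) : catW p m q 0 = p 0 := by
  unfold catW; rw [if_pos (Nat.zero_le m)]

lemma catW_last {p q : ℕ → A} {m n : ℕ} (hlink : p m = q 0) :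
    catW p m q (m + n) = q n := by
  unfold catW
  split
  · have : n = 0 := by omega
    rw [this] at *
    simpa [show m + 0 = m by omega] using hlink
  · congr 1; omega

lemma catW_vertex {p q : ℕ → A} {m : ℕ} (i : ℕ) :
    (∃ j, j ≤ m ∧ catW p m q i = p j) ∨ (∃ j, catW p m q i = q j) := by
  unfold catW
  split
  · exact Or.inl ⟨i, by omega, rfl⟩
  · exact Or.inr ⟨i - m, rfl⟩

lemma catW_edge {p q : ℕ → A} {m n : ℕ} (hlink : p m = q 0) {a b : A}
    (h : EdgeOf (catW p m q) (m + n) a b) : EdgeOf p m a b ∨ EdgeOf q n a b := by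
  obtain ⟨i, hi, ha, hb⟩ := h
  unfold catW at ha hb
  by_cases h1 : i + 1 ≤ m
  · rw [if_pos (by omega)] at ha; rw [if_pos h1] at hb
    exact Or.inl ⟨i, by omega, ha, hb⟩
  · rw [if_neg h1] at hb
    right
    refine ⟨i - m, by omega, ?_, ?_⟩
    · rw [← ha]
      split
      · have : i = m := by omega
        rw [this, hlink]
        congr 1
        omega
      · rfl
    · rw [← hb]
      congr 1
      omega

def preW (u : A) (p : ℕ → A) : ℕ → A := fun i => if i = 0 then u else p (i - 1)

lemma preW_walk {att : A → A → Prop} {p : ℕ → A} {n : ℕ} {u : A}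
    (hp : IsWalk att p n) (h : att u (p 0)) : IsWalk att (preW u p) (n + 1) := by
  intro i hi
  unfold preW
  rcases Nat.eq_zero_or_pos i with h0 | h0
  · subst h0; simpa using h
  · rw [if_neg (by omega), if_neg (by omega)]
    have e : i + 1 - 1 = (i - 1) + 1 := by omega
    rw [e]
    exact hp (i - 1) (by omega)

lemma preW_zero (u : A) (p : ℕ → A) : preW u p 0 = u := rfl

lemma preW_last (u : A) (p : ℕ → A) {n : ℕ} : preW u p (n + 1) = p n := by
  unfold preW; rw [if_neg (by omega)]; congr 1

lemma preW_vertex (u : A) (p : ℕ → A) (i : ℕ) : preW u p i = u ∨ ∃ j, preW u p i = p j := by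
  unfold preW; split
  · exact Or.inl rfl
  · exact Or.inr ⟨i - 1, rfl⟩

-- walk to simple walk
lemma walk_to_simple {att : A → A → Prop} :
    ∀ n (p : ℕ → A), IsWalk att p n →
    ∃ m q, m ≤ n ∧ IsWalk att q m ∧ q 0 = p 0 ∧ q m = p n ∧
      ∀ i j, i ≤ m → j ≤ m → q i = q j → i = j := by
  intro n
  induction n using Nat.strong_induction_on with
  | _ n ih =>
    intro p hw
    by_cases hinj : ∀ i j, i ≤ n → j ≤ n → p i = p j → i = j
    · exact ⟨n, p, le_refl n, hw, rfl, rfl, hinj⟩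
    push_neg at hinj
    obtain ⟨i0, j0, hi0, hj0, heq0, hne0⟩ := hinj
    have main : ∀ i j, i < j → j ≤ n → p i = p j →
        ∃ m q, m ≤ n ∧ IsWalk att q m ∧ q 0 = p 0 ∧ q m = p n ∧
          ∀ i j, i ≤ m → j ≤ m → q i = q j → i = j := by
      intro i j hij hjn heq
      set b := n - (j - i) with hb
      have hblt : b < n := by omega
      set q2 : ℕ → A := fun t => if t ≤ i then p t else p (t + (j - i)) with hq2
      have hw2 : IsWalk att q2 b := by
        intro t ht
        simp only [hq2]
        by_cases h1 : t + 1 ≤ i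
        · rw [if_pos (by omega), if_pos h1]
          exact hw t (by omega)
        · by_cases h2 : t ≤ i
          · have hti : t = i := by omega
            rw [if_pos h2, if_neg h1, hti, heq]
            have e : i + 1 + (j - i) = j + 1 := by omega
            rw [e]
            exact hw j (by omega)
          · rw [if_neg h2, if_neg h1]
            have := hw (t + (j - i)) (by omega)
            simpa [show t + 1 + (j-i) = t + (j-i) + 1 by omega] using this
      have h02 : q2 0 = p 0 := by simp [hq2]
      have hend2 : q2 b = p n := by
        simp only [hq2]
        split
        · have hj : j = n := by omega
          have hbi : b = i := by omega
          rw [hbi, heq, hj]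
        · congr 1; omega
      obtain ⟨m, q, hm0, hm2, hm3, hm4, hm5⟩ := ih b hblt q2 hw2
      exact ⟨m, q, by omega, hm2, by rw [hm3, h02], by rw [hm4, hend2], hm5⟩
    rcases lt_or_gt_of_ne hne0 with h | h
    · exact main i0 j0 h hj0 heq0
    · exact main j0 i0 h hi0 heq0.symm

lemma transGen_to_walk {att : A → A → Prop} {x y : A} (h : Relation.TransGen att x y) :
    ∃ n p, 0 < n ∧ IsWalk att p n ∧ p 0 = x ∧ p n = y := by
  induction h with
  | @single b hb =>
    refine ⟨1, fun i => if i = 0 then x else b, Nat.one_pos, ?_, rfl, rfl⟩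
    intro i hi
    have : i = 0 := by omega
    subst this
    simpa using hb
  | @tail b d hxb hbd ih =>
    obtain ⟨n, p, hn, hw, h0, hend⟩ := ih
    refine ⟨n + 1, fun i => if i ≤ n then p i else d, by omega, ?_, ?_, ?_⟩
    · intro i hi
      show att (if i ≤ n then p i else d) (if i + 1 ≤ n then p (i + 1) else d)
      by_cases h1' : i + 1 ≤ n
      · rw [if_pos (by omega), if_pos h1']
        exact hw i (by omega)
      · have hieq : i = n := by omega
        subst hieq
        rw [if_pos (le_refl i), if_neg h1', hend]
        exact hbd
    · show (if 0 ≤ n then p 0 else d) = x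
      rw [if_pos (Nat.zero_le n)]
      exact h0
    · show (if n + 1 ≤ n then p (n + 1) else d) = d
      rw [if_neg (by omega)]

-- Master parity lemma
lemma closed_walk_even {att : A → A → Prop} {c : A} (hc : ¬ att c c)
    (P : ℕ → A) (m : ℕ) (hPinj : ∀ i j, i ≤ m → j ≤ m → P i = P j → i = j)
    {p : ℕ → A} {n : ℕ} (hw : IsWalk att p n) (hclosed : p 0 = p n)
    (hedge : ∀ a b, EdgeOf p n a b →
      (∃ i, i < m ∧ P i = a ∧ P (i + 1) = b) ∨
      ((a = c ∨ ¬ inOddCycle att a) ∧ (b = c ∨ ¬ inOddCycle att b))) :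
    ¬ Odd n := by
  intro hodd
  obtain ⟨mq, q, hm1, hm2, hm3, hm4, hm5⟩ := exists_simple_odd_cycle n hodd p hw hclosed
  have h0mq : 0 < mq := hm1.pos
  have hO : ∀ k, k ≤ mq → inOddCycle att (q k) :=
    fun k hk => inOddCycle_of_cycle hm2 hm1 hm3 hm4 hk
  have key : ∀ i, i < mq → ∃ a, a < m ∧ P a = q i ∧ P (a + 1) = q (i + 1) := by
    intro i hi
    have hedq : EdgeOf p n (q i) (q (i + 1)) := hm5 _ _ ⟨i, hi, rfl, rfl⟩
    rcases hedge _ _ hedq with h | ⟨ha, hb⟩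
    · exact h
    · exfalso
      have h1 : q i = c := ha.resolve_right (fun h => h (hO i (le_of_lt hi)))
      have h2 : q (i + 1) = c := hb.resolve_right (fun h => h (hO (i + 1) hi))
      have := hm2 i hi
      rw [h1, h2] at this
      exact hc this
  choose f hf1 hf2 hf3 using key
  have lin : ∀ i, ∀ hi : i < mq, f i hi = f 0 h0mq + i := by
    intro i
    induction i with
    | zero => intro hi; rfl
    | succ i ihi =>
      intro hi
      have hi' : i < mq := by omega
      have e : P (f (i + 1) hi) = P (f i hi' + 1) := (hf2 (i + 1) hi).trans (hf3 i hi').symm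
      have := hPinj _ _ (le_of_lt (hf1 (i + 1) hi)) (by have := hf1 i hi'; omega) e
      rw [this, ihi hi']
      omega
  have hlast : mq - 1 < mq := by omega
  have e2 : P (f (mq - 1) hlast + 1) = P (f 0 h0mq) := by
    rw [hf3 (mq - 1) hlast, hf2 0 h0mq, show mq - 1 + 1 = mq by omega, ← hm3]
  have := hPinj _ _ (by have := hf1 (mq - 1) hlast; omega) (le_of_lt (hf1 0 h0mq)) e2
  rw [lin (mq - 1) hlast] at this
  omega

def appW (p : ℕ → A) (n : ℕ) (w : A) : ℕ → A := fun i => if i ≤ n then p i else w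

lemma appW_walk {att : A → A → Prop} {p : ℕ → A} {n : ℕ} {w : A}
    (hp : IsWalk att p n) (h : att (p n) w) : IsWalk att (appW p n w) (n + 1) := by
  intro i hi
  show att (if i ≤ n then p i else w) (if i + 1 ≤ n then p (i + 1) else w)
  by_cases h1 : i + 1 ≤ n
  · rw [if_pos (by omega), if_pos h1]
    exact hp i (by omega)
  · have : i = n := by omega
    subst this
    rw [if_pos (le_refl i), if_neg h1]
    exact h

lemma appW_zero (p : ℕ → A) (n : ℕ) (w : A) : appW p n w 0 = p 0 := by
  unfold appW; rw [if_pos (Nat.zero_le n)]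

lemma appW_last (p : ℕ → A) (n : ℕ) (w : A) : appW p n w (n + 1) = w := by
  unfold appW; rw [if_neg (by omega)]

lemma catW_vertex' {p q : ℕ → A} {m n : ℕ} (i : ℕ) (hi : i ≤ m + n) :
    (∃ j, j ≤ m ∧ catW p m q i = p j) ∨ (∃ j, j ≤ n ∧ catW p m q i = q j) := by
  unfold catW
  split
  · exact Or.inl ⟨i, by omega, rfl⟩
  · exact Or.inr ⟨i - m, by omega, rfl⟩

/-- vertices allowed in the odd-cycle-free region (plus `c`). -/
def Hvx (att : A → A → Prop) (c : A) (v : A) : Prop := v = c ∨ ¬ inOddCycle att v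

/-- even-length walk to `c` within the region -/
def ERch (att : A → A → Prop) (c v : A) : Prop :=
  ∃ n p, IsWalk att p n ∧ (∀ i, i ≤ n → Hvx att c (p i)) ∧ p 0 = v ∧ p n = c ∧ Even n

def ORch (att : A → A → Prop) (c v : A) : Prop :=
  ∃ n p, IsWalk att p n ∧ (∀ i, i ≤ n → Hvx att c (p i)) ∧ p 0 = v ∧ p n = c ∧ Odd n

lemma not_ERch_ORch {att : A → A → Prop} {c : A} (h1 : oneSCC att) (hc : ¬ att c c) (v : A) :
    ERch att c v → ORch att c v → False := by
  intro he ho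
  obtain ⟨n, p, hwp, hvp, hp0, hpn, hne⟩ := he
  obtain ⟨n', p', hwp', hvp', hp0', hpn', hno⟩ := ho
  by_cases hvc : v = c
  · subst hvc
    exact closed_walk_even hc (fun _ => v) 0 (by intro i j hi hj _; omega) hwp'
      (by rw [hp0', hpn']) (fun a b hab => by
        obtain ⟨i, hi, ha, hb⟩ := hab
        exact Or.inr ⟨ha ▸ hvp' i (by omega), hb ▸ hvp' (i + 1) (by omega)⟩) hno
  · have htg : Relation.TransGen att c v := ((h1 c v).resolve_left (fun h => hvc h.symm)).1
    obtain ⟨n0, P0, hn0, hwP0, hP00, hP0n⟩ := transGen_to_walk htg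
    obtain ⟨m, P, hm_le, hwP, hPz, hPlast, hPinj⟩ := walk_to_simple n0 P0 hwP0
    have main : ∀ (nq : ℕ) (q : ℕ → A), IsWalk att q nq → (∀ i, i ≤ nq → Hvx att c (q i)) →
        q 0 = v → q nq = c → ¬ Odd (m + nq) := by
      intro nq q hwq hvq hq0 hqn
      have hlink : P m = q 0 := by rw [hPlast, hP0n, hq0]
      apply closed_walk_even hc P m hPinj (catW_walk hwP hwq hlink) ?_ ?_
      · show catW P m q 0 = catW P m q (m + nq)
        rw [catW_zero, catW_last hlink, hqn, hPz, hP00]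
      · intro a b hab
        rcases catW_edge hlink hab with h | h
        · obtain ⟨i, hi, ha, hb⟩ := h
          exact Or.inl ⟨i, hi, ha, hb⟩
        · obtain ⟨i, hi, ha, hb⟩ := h
          exact Or.inr ⟨ha ▸ hvq i (by omega), hb ▸ hvq (i + 1) (by omega)⟩
    have e1 := main n p hwp hvp hp0 hpn
    have e2 := main n' p' hwp' hvp' hp0' hpn'
    obtain ⟨k, hk⟩ := hne
    obtain ⟨k', hk'⟩ := hno
    rcases Nat.even_or_odd m with ⟨t, ht⟩ | ⟨t, ht⟩
    · exact e2 ⟨t + k', by omega⟩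
    · exact e1 ⟨t + k, by omega⟩

lemma ERch_c {att : A → A → Prop} (c : A) : ERch att c c :=
  ⟨0, fun _ => c, fun i hi => absurd hi (by omega), fun i _ => Or.inl rfl, rfl, rfl, Even.zero⟩

lemma ORch_step {att : A → A → Prop} {c u v : A} (hu : Hvx att c u) (h : att u v)
    (he : ERch att c v) : ORch att c u := by
  obtain ⟨n, p, hwp, hvp, hp0, hpn, hne⟩ := he
  refine ⟨n + 1, preW u p, preW_walk hwp (hp0 ▸ h), ?_, preW_zero u p, ?_, ?_⟩
  · intro i hi
    unfold preW
    split
    · exact hu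
    · exact hvp (i - 1) (by omega)
  · rw [preW_last]; exact hpn
  · obtain ⟨t, ht⟩ := hne; exact ⟨t, by omega⟩

lemma ERch_step {att : A → A → Prop} {c u v : A} (hu : Hvx att c u) (h : att u v)
    (ho : ORch att c v) : ERch att c u := by
  obtain ⟨n, p, hwp, hvp, hp0, hpn, hno⟩ := ho
  refine ⟨n + 1, preW u p, preW_walk hwp (hp0 ▸ h), ?_, preW_zero u p, ?_, ?_⟩
  · intro i hi
    unfold preW
    split
    · exact hu
    · exact hvp (i - 1) (by omega)
  · rw [preW_last]; exact hpn
  · obtain ⟨t, ht⟩ := hno; exact ⟨t + 1, by omega⟩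

lemma ORch_of_att_c {att : A → A → Prop} {c b : A} (hb : Hvx att c b) (h : att b c) :
    ORch att c b := by
  refine ⟨1, fun i => if i = 0 then b else c, ?_, ?_, rfl, rfl, odd_one⟩
  · intro i hi
    have : i = 0 := by omega
    subst this
    simpa using h
  · intro i _
    show Hvx att c (if i = 0 then b else c)
    split
    · exact hb
    · exact Or.inl rfl


def WalkInS (att : A → A → Prop) (S : Set A) (p : ℕ → A) (n : ℕ) : Prop :=
  IsWalk att p n ∧ ∀ i, i ≤ n → p i ∈ S

def ReachS (att : A → A → Prop) (S : Set A) (u v : A) : Prop :=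
  ∃ n p, WalkInS att S p n ∧ p 0 = u ∧ p n = v

lemma ReachS_refl {att : A → A → Prop} {S : Set A} {u : A} (hu : u ∈ S) : ReachS att S u u :=
  ⟨0, fun _ => u, ⟨fun i hi => absurd hi (by omega), fun _ _ => hu⟩, rfl, rfl⟩

lemma ReachS_left {att : A → A → Prop} {S : Set A} {u v : A} (h : ReachS att S u v) : u ∈ S := by
  obtain ⟨n, p, ⟨hw, hv⟩, h0, hn⟩ := h
  rw [← h0]; exact hv 0 (by omega)

lemma ReachS_right {att : A → A → Prop} {S : Set A} {u v : A} (h : ReachS att S u v) : v ∈ S := by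
  obtain ⟨n, p, ⟨hw, hv⟩, h0, hn⟩ := h
  rw [← hn]; exact hv n (le_refl n)

lemma ReachS_trans {att : A → A → Prop} {S : Set A} {u v w : A}
    (h : ReachS att S u v) (h' : ReachS att S v w) : ReachS att S u w := by
  obtain ⟨n, p, ⟨hw, hv⟩, h0, hn⟩ := h
  obtain ⟨n', p', ⟨hw', hv'⟩, h0', hn'⟩ := h'
  have hlink : p n = p' 0 := by rw [hn, h0']
  refine ⟨n + n', catW p n p', ⟨catW_walk hw hw' hlink, ?_⟩, ?_, ?_⟩
  · intro i hi
    rcases catW_vertex' i hi with ⟨j, hj, he⟩ | ⟨j, hj, he⟩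
    · rw [he]; exact hv j hj
    · rw [he]; exact hv' j hj
  · rw [catW_zero]; exact h0
  · rw [catW_last hlink]; exact hn'

lemma ReachS_snoc {att : A → A → Prop} {S : Set A} {u v w : A}
    (h : ReachS att S u v) (hvw : att v w) (hw : w ∈ S) : ReachS att S u w := by
  obtain ⟨n, p, ⟨hwp, hv⟩, h0, hn⟩ := h
  refine ⟨n + 1, appW p n w, ⟨appW_walk hwp (hn ▸ hvw), ?_⟩, ?_, ?_⟩
  · intro i hi
    show (if i ≤ n then p i else w) ∈ S
    split
    · exact hv i (by assumption)
    · exact hw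
  · rw [appW_zero]; exact h0
  · rw [appW_last]

lemma richardson_s14 {att : A → A → Prop} [Fintype A] :
    ∀ (k : ℕ) (S : Set A), S.ncard ≤ k →
    (∀ (p : ℕ → A) (n : ℕ), WalkInS att S p n → p 0 = p n → ¬ Odd n) →
    ∃ K : Set A, K ⊆ S ∧ (∀ a ∈ K, ∀ b ∈ K, ¬ att a b) ∧
      (∀ v ∈ S, v ∉ K → ∃ x ∈ K, att x v) := by
  intro k
  induction k with
  | zero =>
    intro S hS _
    have hSe : S = ∅ := (Set.ncard_eq_zero (Set.toFinite S)).mp (by omega)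
    refine ⟨∅, Set.empty_subset S, ?_, ?_⟩
    · intro a ha; exact absurd ha (Set.notMem_empty a)
    · intro v hv _; rw [hSe] at hv; exact absurd hv (Set.notMem_empty v)
  | succ k ih =>
    intro S hS hpar
    rcases Set.eq_empty_or_nonempty S with hSe | hne
    · refine ⟨∅, Set.empty_subset S, ?_, ?_⟩
      · intro a ha; exact absurd ha (Set.notMem_empty a)
      · intro v hv _; rw [hSe] at hv; exact absurd hv (Set.notMem_empty v)
    obtain ⟨v₀, hv₀S, hv₀min⟩ := Set.exists_min_image S
        (fun v => {u | ReachS att S u v}.ncard) (Set.toFinite S) hne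
    set T : Set A := {t | ReachS att S v₀ t ∧ ReachS att S t v₀} with hT
    have hTS : T ⊆ S := fun t ht => ReachS_right ht.1
    have hv₀T : v₀ ∈ T := ⟨ReachS_refl hv₀S, ReachS_refl hv₀S⟩
    have hAnc : ∀ t ∈ T, {u | ReachS att S u t} = {u | ReachS att S u v₀} := by
      intro t ht
      ext u
      exact ⟨fun hu => ReachS_trans hu ht.2, fun hu => ReachS_trans hu ht.1⟩
    have hinit : ∀ u ∈ S, ∀ t ∈ T, att u t → u ∈ T := by
      intro u huS t htT hut
      have hsub : {w | ReachS att S w u} ⊆ {w | ReachS att S w t} :=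
        fun w hw => ReachS_snoc hw hut (hTS htT)
      rw [hAnc t htT] at hsub
      have hminu := hv₀min u huS
      have heq : {w | ReachS att S w u} = {w | ReachS att S w v₀} :=
        Set.eq_of_subset_of_ncard_le hsub hminu
      have hv₀u : ReachS att S v₀ u := by
        have hmem : v₀ ∈ {w | ReachS att S w v₀} := ReachS_refl hv₀S
        rw [← heq] at hmem; exact hmem
      exact ⟨hv₀u, ReachS_trans (ReachS_snoc (ReachS_refl huS) hut (hTS htT)) htT.2⟩
    set ev : A → Prop := fun t => ∃ n p, WalkInS att S p n ∧ p 0 = v₀ ∧ p n = t ∧ Even n with hev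
    set od : A → Prop := fun t => ∃ n p, WalkInS att S p n ∧ p 0 = v₀ ∧ p n = t ∧ Odd n with hod
    have hdisj : ∀ t ∈ T, ev t → od t → False := by
      rintro t htT ⟨n, p, hwp, hp0, hpn, hne'⟩ ⟨n', p', hwp', hp0', hpn', hno'⟩
      obtain ⟨r, q, ⟨hwq, hvq⟩, hq0, hqr⟩ := htT.2
      have key : ∀ (nn : ℕ) (pp : ℕ → A), WalkInS att S pp nn → pp 0 = v₀ → pp nn = t →
          ¬ Odd (nn + r) := by
        rintro nn pp ⟨hwpp, hvpp⟩ hpp0 hppn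
        have hlink : pp nn = q 0 := by rw [hppn, hq0]
        refine hpar (catW pp nn q) (nn + r) ⟨catW_walk hwpp hwq hlink, ?_⟩ ?_
        · intro i hi
          rcases catW_vertex' i hi with ⟨j, hj, heq⟩ | ⟨j, hj, heq⟩
          · rw [heq]; exact hvpp j hj
          · rw [heq]; exact hvq j hj
        · rw [catW_zero, catW_last hlink, hpp0, hqr]
      have c1 := key n p hwp hp0 hpn
      have c2 := key n' p' hwp' hp0' hpn'
      obtain ⟨a1, ha1⟩ := hne'
      obtain ⟨a2, ha2⟩ := hno'
      rcases Nat.even_or_odd r with ⟨b1, hb1⟩ | ⟨b1, hb1⟩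
      · exact c2 ⟨a2 + b1, by omega⟩
      · exact c1 ⟨a1 + b1, by omega⟩
    have hTrch : ∀ t ∈ T, ev t ∨ od t := by
      intro t htT
      obtain ⟨n, p, hwp, hp0, hpn⟩ := htT.1
      rcases Nat.even_or_odd n with h | h
      · exact Or.inl ⟨n, p, hwp, hp0, hpn, h⟩
      · exact Or.inr ⟨n, p, hwp, hp0, hpn, h⟩
    set KT : Set A := {t | t ∈ T ∧ ev t} with hKT
    have hKTdom : ∀ t ∈ T, t ∉ KT → ∃ x ∈ KT, att x t := by
      intro t htT htK
      have hodt : od t := (hTrch t htT).resolve_left (fun h => htK ⟨htT, h⟩)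
      obtain ⟨n, p, ⟨hwp, hvp⟩, hp0, hpn, hno⟩ := hodt
      have hn1 : 0 < n := hno.pos
      have hlastedge : att (p (n - 1)) t := by
        have := hwp (n - 1) (by omega)
        rwa [show n - 1 + 1 = n by omega, hpn] at this
      have hwtr : WalkInS att S p (n - 1) :=
        ⟨fun i hi => hwp i (by omega), fun i hi => hvp i (by omega)⟩
      have hmemT : p (n - 1) ∈ T := by
        constructor
        · exact ⟨n - 1, p, hwtr, hp0, rfl⟩
        · exact ReachS_trans (ReachS_snoc (ReachS_refl (hvp (n - 1) (by omega)))
            hlastedge (hTS htT)) htT.2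
      refine ⟨p (n - 1), ⟨hmemT, ?_⟩, hlastedge⟩
      obtain ⟨a1, ha1⟩ := hno
      exact ⟨n - 1, p, hwtr, hp0, rfl, ⟨a1, by omega⟩⟩
    have hKTind : ∀ a ∈ KT, ∀ b ∈ KT, ¬ att a b := by
      rintro a ⟨haT, hae⟩ b ⟨hbT, hbe⟩ hab
      apply hdisj b hbT hbe
      obtain ⟨n, p, ⟨hwp, hvp⟩, hp0, hpn, hne'⟩ := hae
      refine ⟨n + 1, appW p n b, ⟨appW_walk hwp (hpn ▸ hab), ?_⟩, ?_, ?_, ?_⟩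
      · intro i hi
        show (if i ≤ n then p i else b) ∈ S
        split
        · exact hvp i (by assumption)
        · exact hTS hbT
      · rw [appW_zero]; exact hp0
      · rw [appW_last]
      · obtain ⟨a1, ha1⟩ := hne'; exact ⟨a1, by omega⟩
    set S' : Set A := {v | v ∈ S ∧ v ∉ T ∧ ¬ ∃ x ∈ KT, att x v} with hS'
    have hS'sub : S' ⊆ S := fun v hv => hv.1
    have hS'ss : S' ⊂ S := ⟨hS'sub, fun hsub => (hsub hv₀S).2.1 hv₀T⟩
    have hS'card : S'.ncard ≤ k := by
      have := Set.ncard_lt_ncard hS'ss (Set.toFinite S)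
      omega
    have hpar' : ∀ (p : ℕ → A) (n : ℕ), WalkInS att S' p n → p 0 = p n → ¬ Odd n := by
      rintro p n ⟨hw, hv⟩ hcl
      exact hpar p n ⟨hw, fun i hi => (hv i hi).1⟩ hcl
    obtain ⟨K', hK'sub, hK'ind, hK'dom⟩ := ih S' hS'card hpar'
    refine ⟨KT ∪ K', ?_, ?_, ?_⟩
    · intro x hx
      rcases hx with hx | hx
      · exact hTS hx.1
      · exact hS'sub (hK'sub hx)
    · intro a ha b hb hab
      rcases ha with ha | ha <;> rcases hb with hb | hb
      · exact hKTind a ha b hb hab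
      · exact (hK'sub hb).2.2 ⟨a, ha, hab⟩
      · exact (hK'sub ha).2.1 (hinit a (hS'sub (hK'sub ha)) b hb.1 hab)
      · exact hK'ind a ha b hb hab
    · intro v hvS hvK
      by_cases hvT : v ∈ T
      · obtain ⟨x, hx, hxv⟩ := hKTdom v hvT (fun h => hvK (Or.inl h))
        exact ⟨x, Or.inl hx, hxv⟩
      by_cases hvKT : ∃ x ∈ KT, att x v
      · obtain ⟨x, hx, hxv⟩ := hvKT
        exact ⟨x, Or.inl hx, hxv⟩
      · have hvS' : v ∈ S' := ⟨hvS, hvT, hvKT⟩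
        obtain ⟨x, hx, hxv⟩ := hK'dom v hvS' (fun h => hvK (Or.inr h))
        exact ⟨x, Or.inr hx, hxv⟩


lemma transGen_last {r : A → A → Prop} {a b : A} (h : Relation.TransGen r a b) : ∃ y, r y b := by
  induction h with
  | single h => exact ⟨_, h⟩
  | tail _ h _ => exact ⟨_, h⟩

lemma exists_seed {att : A → A → Prop} [Fintype A] (h1 : oneSCC att) (c : A) (hc : ¬ att c c) :
    ∃ S₀ : Set A, conflictFree att S₀ ∧ c ∈ S₀ ∧ (∀ b ∈ S₀, ¬ att b c) ∧
      (∀ x, ¬ inOddCycle att x → (∀ y, att y x → ¬ inOddCycle att y) →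
        x ∈ S₀ ∨ ∃ s ∈ S₀, att s x) := by
  classical
  set ERp : Set A := {v | Hvx att c v ∧ ERch att c v} with hERp
  set V₂ : Set A := {v | Hvx att c v ∧ ¬ ERch att c v ∧ ¬ ORch att c v ∧
    ¬ ∃ s ∈ ERp, att s v} with hV₂
  have hV₂par : ∀ (p : ℕ → A) (n : ℕ), WalkInS att V₂ p n → p 0 = p n → ¬ Odd n := by
    rintro p n ⟨hw, hv⟩ hcl
    exact closed_walk_even hc (fun _ => c) 0 (by intro i j hi hj _; omega) hw hcl
      (fun a b hab => by
        obtain ⟨i, hi, ha, hb⟩ := hab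
        exact Or.inr ⟨ha ▸ (hv i (by omega)).1, hb ▸ (hv (i + 1) (by omega)).1⟩)
  obtain ⟨K, hKsub, hKind, hKdom⟩ := richardson_s14 (V₂.ncard) V₂ (le_refl _) hV₂par
  refine ⟨ERp ∪ K, ?_, ?_, ?_, ?_⟩
  · rintro a ha b hb hab
    rcases ha with ⟨haH, haE⟩ | haK <;> rcases hb with ⟨hbH, hbE⟩ | hbK
    · exact not_ERch_ORch h1 hc a haE (ORch_step haH hab hbE)
    · exact (hKsub hbK).2.2.2 ⟨a, ⟨haH, haE⟩, hab⟩
    · exact (hKsub haK).2.2.1 (ORch_step (hKsub haK).1 hab hbE)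
    · exact hKind a haK b hbK hab
  · exact Or.inl ⟨Or.inl rfl, ERch_c c⟩
  · rintro b hb hbc
    rcases hb with ⟨hbH, hbE⟩ | hbK
    · exact not_ERch_ORch h1 hc b hbE (ORch_of_att_c hbH hbc)
    · exact (hKsub hbK).2.2.1 (ORch_of_att_c (hKsub hbK).1 hbc)
  · intro x hxO hxatt
    have hxH : Hvx att c x := Or.inr hxO
    by_cases hxE : ERch att c x
    · exact Or.inl (Or.inl ⟨hxH, hxE⟩)
    by_cases hxOR : ORch att c x
    · have hxc : x ≠ c := by
        intro h; subst h
        exact not_ERch_ORch h1 hc x (ERch_c x) hxOR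
      obtain ⟨y, hy⟩ := transGen_last (((h1 c x).resolve_left (fun h => hxc h.symm)).1)
      have hyH : Hvx att c y := Or.inr (hxatt y hy)
      exact Or.inr ⟨y, Or.inl ⟨hyH, ERch_step hyH hy hxOR⟩, hy⟩
    by_cases hxdom : ∃ s ∈ ERp, att s x
    · obtain ⟨s, hs, hsx⟩ := hxdom
      exact Or.inr ⟨s, Or.inl hs, hsx⟩
    · have hxV₂ : x ∈ V₂ := ⟨hxH, hxE, hxOR, hxdom⟩
      by_cases hxK : x ∈ K
      · exact Or.inl (Or.inr hxK)
      · obtain ⟨s, hs, hsx⟩ := hKdom x hxV₂ hxK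
        exact Or.inr ⟨s, Or.inr hs, hsx⟩

theorem sccoocNaive_SCCSemiRich [Fintype A] (att : A → A → Prop)
    (h1 : oneSCC att) (c : A) (hc : ¬ att c c) :
    ∃ E, sccoocNaiveExt att E ∧ c ∈ E ∧ ¬ attacks att E c := by
  classical
  obtain ⟨S₀, hcf, hcS, hnac, hdom⟩ := exists_seed h1 c hc
  set good : Finset A → Prop := fun F =>
    conflictFree att ↑F ∧ c ∈ F ∧ (∀ b ∈ F, ¬ att b c) ∧ S₀ ⊆ ↑F with hgood
  have hS₀fin : S₀.Finite := Set.toFinite S₀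
  have hS₀good : good hS₀fin.toFinset := by
    refine ⟨?_, ?_, ?_, ?_⟩
    · rw [Set.Finite.coe_toFinset]; exact hcf
    · rw [Set.Finite.mem_toFinset]; exact hcS
    · intro b hb; rw [Set.Finite.mem_toFinset] at hb; exact hnac b hb
    · rw [Set.Finite.coe_toFinset]
  set 𝔉 : Finset (Finset A) := Finset.univ.filter good with h𝔉
  have hne : 𝔉.Nonempty := ⟨hS₀fin.toFinset, Finset.mem_filter.mpr ⟨Finset.mem_univ _, hS₀good⟩⟩
  obtain ⟨F, hF𝔉, hFmax⟩ := Finset.exists_max_image 𝔉 Finset.card hne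
  have hFgood : good F := by
    have := Finset.mem_filter.mp hF𝔉
    exact this.2
  obtain ⟨hFcf, hFc, hFnac, hFS₀⟩ := hFgood
  have hmaxadd : ∀ t, t ∉ (F : Set A) → conflictFree att (insert t (F : Set A)) →
      ¬ att t c → False := by
    intro t ht hcf' htc
    have hgood' : good (insert t F) := by
      refine ⟨?_, Finset.mem_insert_of_mem hFc, ?_, ?_⟩
      · have he : ((insert t F : Finset A) : Set A) = insert t (F : Set A) := by
          simp
        rw [he]; exact hcf'
      · intro b hb
        rcases Finset.mem_insert.mp hb with rfl | hb
        · exact htc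
        · exact hFnac b hb
      · intro s hs
        have h2 : s ∈ (F : Set A) := hFS₀ hs
        have : s ∈ F := h2
        simp [Finset.mem_insert, this]
    have hcard := hFmax (insert t F) (Finset.mem_filter.mpr ⟨Finset.mem_univ _, hgood'⟩)
    have hlt : F.card < (insert t F).card :=
      Finset.card_lt_card (Finset.ssubset_insert (by simpa using ht))
    omega
  refine ⟨(F : Set A), ⟨hFcf, ?_, ?_⟩, hFc, ?_⟩
  · -- scooc
    intro x hxO hxatt hnotatt
    rcases hdom x hxO hxatt with hx | ⟨s, hs, hsx⟩
    · exact hFS₀ hx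
    · exact absurd hsx (hnotatt s (hFS₀ hs))
  · -- maximality
    intro T hTcf hTsc hET
    apply Set.Subset.antisymm ?_ hET
    intro t htT
    by_contra htE
    apply hmaxadd t htE ?_ ?_
    · intro a ha b hb hab
      have haT : a ∈ T := by
        rcases Set.mem_insert_iff.mp ha with rfl | ha'
        · exact htT
        · exact hET ha'
      have hbT : b ∈ T := by
        rcases Set.mem_insert_iff.mp hb with rfl | hb'
        · exact htT
        · exact hET hb'
      exact hTcf a haT b hbT hab
    · exact hTcf t htT c (hET hFc) 
  · rintro ⟨b, hb, hbc⟩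
    exact hFnac b hb hbc
end
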